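/- Let u, φ ∈ 𝒮(ℝⁿ). Then the wave packet transform intertwines the Laplacian as follows: W_φ((1/2)Δu)(x,ξ) = W_{(1/2)Δφ} u(x,ξ) + i ξ · ∇_x W_φ u(x,ξ) − (|ξ|²/2) W_φ u(x,ξ). -/

import Mathlib

open SchwartzMap Complex MeasureTheory
open scoped BigOperators

/-- The Laplacian `Δ F = ∑ j ∂²F/∂y_j²` of a complex-valued function on `ℝⁿ`. -/
noncomputable def lap {n : ℕ} (F : EuclideanSpace ℝ (Fin n) → ℂ) :
    EuclideanSpace ℝ (Fin n) → ℂ := fun y =>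
  ∑ j : Fin n, fderiv ℝ (fun z => fderiv ℝ F z (EuclideanSpace.single j 1)) y
    (EuclideanSpace.single j 1)

/-- The wave packet transform `W_φ u (x,ξ) = ∫ conj(φ(y−x)) u(y) e^{−iy·ξ} dy`,
with window an arbitrary function. -/
noncomputable def WPT {n : ℕ} (φ u : EuclideanSpace ℝ (Fin n) → ℂ)
    (x ξ : EuclideanSpace ℝ (Fin n)) : ℂ :=
  ∫ y, starRingEnd ℂ (φ (y - x)) * u y *
    Complex.exp (-Complex.I * ((inner ℝ y ξ : ℝ) : ℂ))

/-- Directional derivative on Schwartz space (replacement for the removed Mathlib name). -/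
noncomputable def SchwartzMap.pderivCLM (𝕜 : Type*) [RCLike 𝕜] {E F : Type*}
    [NormedAddCommGroup E] [NormedSpace ℝ E] [NormedAddCommGroup F] [NormedSpace ℝ F]
    [NormedSpace 𝕜 F] [SMulCommClass ℝ 𝕜 F] (m : E) : 𝓢(E, F) →L[𝕜] 𝓢(E, F) :=
  LineDeriv.lineDerivOpCLM 𝕜 𝓢(E, F) m

theorem SchwartzMap.pderivCLM_apply (𝕜 : Type*) [RCLike 𝕜] {E F : Type*}
    [NormedAddCommGroup E] [NormedSpace ℝ E] [NormedAddCommGroup F] [NormedSpace ℝ F]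
    [NormedSpace 𝕜 F] [SMulCommClass ℝ 𝕜 F] (m : E) (f : 𝓢(E, F)) (x : E) :
    SchwartzMap.pderivCLM 𝕜 m f x = fderiv ℝ f x m :=
  rfl

namespace Stmt12Aux

variable {n : ℕ}

local notation "E" => EuclideanSpace ℝ (Fin n)

/-- The ℝ-linear map `y ↦ -I * ⟪y, ξ⟫`. -/
noncomputable def Mlin (ξ : E) : E →L[ℝ] ℂ :=
  (-Complex.I) • (Complex.ofRealCLM.comp (((innerSL ℝ : E →L[ℝ] E →L[ℝ] ℝ).flip ξ)))

lemma Mlin_apply (ξ y : E) : Mlin ξ y = -Complex.I * ((inner ℝ y ξ : ℝ) : ℂ) := by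
  simp only [Mlin, ContinuousLinearMap.smul_apply, ContinuousLinearMap.comp_apply,
    ContinuousLinearMap.flip_apply, innerSL_apply_apply, Complex.ofRealCLM_apply, smul_eq_mul]

noncomputable def eps (ξ : E) : E → ℂ := fun y => Complex.exp (Mlin ξ y)

lemma eps_eq (ξ y : E) :
    eps ξ y = Complex.exp (-Complex.I * ((inner ℝ y ξ : ℝ) : ℂ)) := by
  rw [eps, Mlin_apply]

lemma norm_eps (ξ y : E) : ‖eps ξ y‖ = 1 := by
  rw [eps_eq]
  simp [Complex.norm_exp]

lemma hasFDerivAt_eps (ξ y : E) :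
    HasFDerivAt (eps ξ) (eps ξ y • Mlin ξ) y :=
  (Mlin ξ).hasFDerivAt.cexp

lemma continuous_eps (ξ : E) : Continuous (eps ξ) :=
  Complex.continuous_exp.comp (Mlin ξ).continuous

noncomputable def conjL : ℂ →L[ℝ] ℂ := Complex.conjCLE.toContinuousLinearMap

lemma conjL_apply (z : ℂ) : conjL z = starRingEnd ℂ z := rfl

/-- The translated-conjugated window `y ↦ conj (ψ (y - x))`. -/
noncomputable def tconj (x : E) (ψ : 𝓢(E, ℂ)) : E → ℂ :=
  fun y => starRingEnd ℂ (ψ (y - x))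

lemma continuous_tconj (x : E) (ψ : 𝓢(E, ℂ)) : Continuous (tconj x ψ) :=
  continuous_star.comp (ψ.continuous.comp (continuous_id.sub continuous_const))

lemma norm_tconj (x : E) (ψ : 𝓢(E, ℂ)) (y : E) :
    ‖tconj x ψ y‖ ≤ SchwartzMap.seminorm ℝ 0 0 ψ := by
  rw [tconj, RCLike.norm_conj]
  exact norm_le_seminorm ℝ ψ _

lemma hasFDerivAt_tconj (x : E) (ψ : 𝓢(E, ℂ)) (y : E) :
    HasFDerivAt (tconj x ψ) (conjL.comp (fderiv ℝ ψ (y - x))) y := by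
  have h1 : HasFDerivAt (fun y : E => y - x) (ContinuousLinearMap.id ℝ E) y :=
    (hasFDerivAt_id y).sub_const x
  have h2 : HasFDerivAt (fun y : E => ψ (y - x))
      ((fderiv ℝ ψ (y - x)).comp (ContinuousLinearMap.id ℝ E)) y :=
    ((ψ.differentiable (y - x)).hasFDerivAt).comp y h1
  have h3 := conjL.hasFDerivAt.comp y h2
  show HasFDerivAt (fun y => starRingEnd ℂ (ψ (y - x))) _ y
  simpa [Function.comp_def, tconj, conjL_apply, ContinuousLinearMap.comp_id] using h3

lemma tconj_deriv_apply (x : E) (ψ : 𝓢(E, ℂ)) (y v : E) :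
    (conjL.comp (fderiv ℝ ψ (y - x))) v
      = tconj x (SchwartzMap.pderivCLM ℝ v ψ) y := by
  simp [conjL_apply, tconj, SchwartzMap.pderivCLM_apply]

/-- The basic integrability fact: (translated conj window) * character * Schwartz is integrable. -/
lemma keyInt (x ξ : E) (ψ f : 𝓢(E, ℂ)) :
    Integrable (fun y => tconj x ψ y * eps ξ y * f y) (volume : Measure E) := by
  refine f.integrable.bdd_mul (c := SchwartzMap.seminorm ℝ 0 0 ψ) ?_
    (Filter.Eventually.of_forall fun y => ?_)
  · exact ((continuous_tconj x ψ).mul (continuous_eps ξ)).aestronglyMeasurable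
  · rw [norm_mul, norm_eps, mul_one]
    exact norm_tconj x ψ y

lemma ibp_mul {f g : E → ℂ} {f' g' : E → E →L[ℝ] ℂ} {v : E}
    (hf : ∀ y, HasFDerivAt f (f' y) y) (hg : ∀ y, HasFDerivAt g (g' y) y)
    (h1 : Integrable (fun y => f' y v * g y) (volume : Measure E))
    (h2 : Integrable (fun y => f y * g' y v) (volume : Measure E))
    (h3 : Integrable (fun y => f y * g y) (volume : Measure E)) :
    ∫ y, f y * g' y v = - ∫ y, f' y v * g y :=
  integral_bilinear_hasFDerivAt_right_eq_neg_left_of_integrable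
    (B := ContinuousLinearMap.mul ℝ ℂ) h1 h2 h3 (fun y _ => hf y) (fun y _ => hg y)


/-- Window times character, `y ↦ conj(ψ(y-x)) e^{-i y·ξ}`. -/
noncomputable def wp (x ξ : E) (ψ : 𝓢(E, ℂ)) : E → ℂ :=
  fun y => tconj x ψ y * eps ξ y

noncomputable def wp' (x ξ : E) (ψ : 𝓢(E, ℂ)) (y : E) : E →L[ℝ] ℂ :=
  tconj x ψ y • (eps ξ y • Mlin ξ) + eps ξ y • (conjL.comp (fderiv ℝ ψ (y - x)))

lemma hasFDerivAt_wp (x ξ : E) (ψ : 𝓢(E, ℂ)) (y : E) :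
    HasFDerivAt (wp x ξ ψ) (wp' x ξ ψ y) y :=
  (hasFDerivAt_tconj x ψ y).mul (hasFDerivAt_eps ξ y)

lemma wp'_apply (x ξ : E) (ψ : 𝓢(E, ℂ)) (y v : E) :
    wp' x ξ ψ y v = Mlin ξ v * wp x ξ ψ y + wp x ξ (SchwartzMap.pderivCLM ℝ v ψ) y := by
  simp only [wp', wp, ContinuousLinearMap.add_apply, ContinuousLinearMap.smul_apply,
    smul_eq_mul, tconj_deriv_apply]
  ring

lemma keyInt' (x ξ : E) (ψ f : 𝓢(E, ℂ)) (a : ℂ) :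
    Integrable (fun y => a * (tconj x ψ y * eps ξ y * f y)) (volume : Measure E) :=
  (keyInt x ξ ψ f).const_mul a

lemma double_ibp (x ξ v : E) (ψ f : 𝓢(E, ℂ)) :
    ∫ y, tconj x ψ y * eps ξ y * (SchwartzMap.pderivCLM ℝ v (SchwartzMap.pderivCLM ℝ v f)) y
      = (Mlin ξ v)^2 * (∫ y, tconj x ψ y * eps ξ y * f y)
        + 2 * Mlin ξ v * (∫ y, tconj x (SchwartzMap.pderivCLM ℝ v ψ) y * eps ξ y * f y)
        + ∫ y, tconj x (SchwartzMap.pderivCLM ℝ v (SchwartzMap.pderivCLM ℝ v ψ)) y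
            * eps ξ y * f y := by
  set pψ := SchwartzMap.pderivCLM ℝ v ψ with hpψ
  set ppψ := SchwartzMap.pderivCLM ℝ v pψ with hppψ
  set pf := SchwartzMap.pderivCLM ℝ v f with hpf
  set ppf := SchwartzMap.pderivCLM ℝ v pf with hppf
  -- the function `y ↦ wp' x ξ ψ y v` and its derivative
  set h : E → ℂ := fun y => Mlin ξ v * wp x ξ ψ y + wp x ξ pψ y with hh
  set H' : E → E →L[ℝ] ℂ := fun y => Mlin ξ v • wp' x ξ ψ y + wp' x ξ pψ y with hH'
  have hwp_eq : ∀ (χ : 𝓢(E, ℂ)) (y : E), wp x ξ χ y = tconj x χ y * eps ξ y := fun _ _ => rfl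
  have hhd : ∀ y, HasFDerivAt h (H' y) y := fun y =>
    ((hasFDerivAt_wp x ξ ψ y).const_mul (Mlin ξ v)).add (hasFDerivAt_wp x ξ pψ y)
  -- step 1 : ∫ wp ψ * ppf = - ∫ h * pf
  have step1 : ∫ y, wp x ξ ψ y * fderiv ℝ (⇑pf) y v = - ∫ y, h y * pf y := by
    have e1 : (fun y => wp' x ξ ψ y v * pf y) = fun y =>
        Mlin ξ v * (tconj x ψ y * eps ξ y * pf y) + tconj x pψ y * eps ξ y * pf y := by
      funext y; rw [wp'_apply]; simp only [wp]; ring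
    have e2 : (fun y => wp x ξ ψ y * fderiv ℝ (⇑pf) y v) = fun y =>
        tconj x ψ y * eps ξ y * ppf y := by
      funext y
      rw [show fderiv ℝ (⇑pf) y v = ppf y from (SchwartzMap.pderivCLM_apply ℝ v pf y).symm]
      rfl
    have hint1 : Integrable (fun y => wp' x ξ ψ y v * pf y) (volume : Measure E) := by
      rw [e1]; exact (keyInt' x ξ ψ pf _).add (keyInt x ξ pψ pf)
    have hint2 : Integrable (fun y => wp x ξ ψ y * fderiv ℝ (⇑pf) y v) (volume : Measure E) := by
      rw [e2]; exact keyInt x ξ ψ ppf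
    have hint3 : Integrable (fun y => wp x ξ ψ y * pf y) (volume : Measure E) :=
      keyInt x ξ ψ pf
    have := ibp_mul (f := wp x ξ ψ) (g := ⇑pf) (f' := wp' x ξ ψ)
      (g' := fun y => fderiv ℝ (⇑pf) y) (v := v)
      (hasFDerivAt_wp x ξ ψ) (fun y => (pf.differentiable y).hasFDerivAt)
      hint1 hint2 hint3
    rw [this]
    congr 1
    apply integral_congr_ae (Filter.Eventually.of_forall fun y => ?_)
    rw [wp'_apply]
  -- step 2 : ∫ h * pf = - ∫ (H' · v) * f
  have step2 : ∫ y, h y * fderiv ℝ (⇑f) y v = - ∫ y, H' y v * f y := by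
    have eH : (fun y => H' y v * f y) = fun y =>
        (Mlin ξ v)^2 * (tconj x ψ y * eps ξ y * f y)
          + (2 * Mlin ξ v) * (tconj x pψ y * eps ξ y * f y)
          + tconj x ppψ y * eps ξ y * f y := by
      funext y
      simp only [hH', ContinuousLinearMap.add_apply, ContinuousLinearMap.smul_apply,
        smul_eq_mul, wp'_apply, wp]
      ring
    have eh : (fun y => h y * fderiv ℝ (⇑f) y v) = fun y =>
        Mlin ξ v * (tconj x ψ y * eps ξ y * pf y) + tconj x pψ y * eps ξ y * pf y := by
      funext y
      rw [show fderiv ℝ (⇑f) y v = pf y from (SchwartzMap.pderivCLM_apply ℝ v f y).symm]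
      simp only [hh, wp]; ring
    have eh3 : (fun y => h y * f y) = fun y =>
        Mlin ξ v * (tconj x ψ y * eps ξ y * f y) + tconj x pψ y * eps ξ y * f y := by
      funext y; simp only [hh, wp]; ring
    have hint1 : Integrable (fun y => H' y v * f y) (volume : Measure E) := by
      rw [eH]; exact ((keyInt' x ξ ψ f _).add (keyInt' x ξ pψ f _)).add (keyInt x ξ ppψ f)
    have hint2 : Integrable (fun y => h y * fderiv ℝ (⇑f) y v) (volume : Measure E) := by
      rw [eh]; exact (keyInt' x ξ ψ pf _).add (keyInt x ξ pψ pf)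
    have hint3 : Integrable (fun y => h y * f y) (volume : Measure E) := by
      rw [eh3]; exact (keyInt' x ξ ψ f _).add (keyInt x ξ pψ f)
    exact ibp_mul (f := h) (g := ⇑f) (f' := H') (g' := fun y => fderiv ℝ (⇑f) y) (v := v)
      hhd (fun y => (f.differentiable y).hasFDerivAt) hint1 hint2 hint3
  -- combine
  have e2 : (fun y => wp x ξ ψ y * fderiv ℝ (⇑pf) y v) = fun y =>
      tconj x ψ y * eps ξ y * ppf y := by
    funext y
    rw [show fderiv ℝ (⇑pf) y v = ppf y from (SchwartzMap.pderivCLM_apply ℝ v pf y).symm]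
    rfl
  have eh2 : (fun y => h y * pf y) = fun y => h y * fderiv ℝ (⇑f) y v := by
    funext y
    rw [show fderiv ℝ (⇑f) y v = pf y from (SchwartzMap.pderivCLM_apply ℝ v f y).symm]
  have eH : (fun y => H' y v * f y) = fun y =>
      (Mlin ξ v)^2 * (tconj x ψ y * eps ξ y * f y)
        + (2 * Mlin ξ v) * (tconj x pψ y * eps ξ y * f y)
        + tconj x ppψ y * eps ξ y * f y := by
    funext y
    simp only [hH', ContinuousLinearMap.add_apply, ContinuousLinearMap.smul_apply,
      smul_eq_mul, wp'_apply, wp]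
    ring
  calc ∫ y, tconj x ψ y * eps ξ y * ppf y
      = ∫ y, wp x ξ ψ y * fderiv ℝ (⇑pf) y v := by rw [e2]
    _ = - ∫ y, h y * pf y := step1
    _ = - ∫ y, h y * fderiv ℝ (⇑f) y v := by rw [eh2]
    _ = ∫ y, H' y v * f y := by rw [step2, neg_neg]
    _ = ∫ y, ((Mlin ξ v)^2 * (tconj x ψ y * eps ξ y * f y)
          + (2 * Mlin ξ v) * (tconj x pψ y * eps ξ y * f y)
          + tconj x ppψ y * eps ξ y * f y) := by rw [eH]
    _ = _ := by
        have i1 := keyInt' x ξ ψ f ((Mlin ξ v)^2)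
        have i2 := keyInt' x ξ pψ f (2 * Mlin ξ v)
        have i12 : Integrable (fun y => (Mlin ξ v)^2 * (tconj x ψ y * eps ξ y * f y)
            + (2 * Mlin ξ v) * (tconj x pψ y * eps ξ y * f y)) (volume : Measure E) :=
          i1.add i2
        rw [integral_add i12 (keyInt x ξ ppψ f), integral_add i1 i2,
          integral_const_mul, integral_const_mul]


lemma fderiv_WPT (x ξ : E) (φ u : 𝓢(E, ℂ)) (v : E) :
    fderiv ℝ (fun x' => WPT (⇑φ) (⇑u) x' ξ) x v
      = - ∫ y, tconj x (SchwartzMap.pderivCLM ℝ v φ) y * eps ξ y * u y := by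
  classical
  set Cd : ℝ := SchwartzMap.seminorm ℝ 0 0 (SchwartzMap.fderivCLM ℝ E ℂ φ) with hCd
  have hfd_bound : ∀ z : E, ‖fderiv ℝ (⇑φ) z‖ ≤ Cd := fun z => by
    simpa [SchwartzMap.fderivCLM_apply] using
      norm_le_seminorm ℝ (SchwartzMap.fderivCLM ℝ E ℂ φ) z
  have hCd0 : 0 ≤ Cd := le_trans (norm_nonneg _) (hfd_bound 0)
  set F : E → E → ℂ := fun x' y => starRingEnd ℂ (φ (y - x')) * u y * eps ξ y with hF
  set F' : E → E → E →L[ℝ] ℂ := fun x' y =>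
    -((u y * eps ξ y) • (conjL.comp (fderiv ℝ (⇑φ) (y - x')))) with hF'
  have hWPT : ∀ x' : E, WPT (⇑φ) (⇑u) x' ξ = ∫ y, F x' y := by
    intro x'
    rw [WPT]
    apply integral_congr_ae (Filter.Eventually.of_forall fun y => ?_)
    simp only [hF, eps_eq]
  have hb : ∀ (x' y : E), ‖F' x' y‖ ≤ Cd * ‖u y‖ := by
    intro x' y
    have h5 : ‖conjL.comp (fderiv ℝ (⇑φ) (y - x'))‖ ≤ Cd := by
      refine ContinuousLinearMap.opNorm_le_bound _ hCd0 fun w => ?_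
      rw [ContinuousLinearMap.comp_apply, conjL_apply, RCLike.norm_conj]
      exact le_trans (ContinuousLinearMap.le_opNorm _ w)
        (mul_le_mul_of_nonneg_right (hfd_bound _) (norm_nonneg w))
    rw [hF', norm_neg]
    refine ContinuousLinearMap.opNorm_le_bound _ (by positivity) fun w => ?_
    rw [ContinuousLinearMap.smul_apply, smul_eq_mul, norm_mul, norm_mul, norm_eps, mul_one]
    calc ‖u y‖ * ‖(conjL.comp (fderiv ℝ (⇑φ) (y - x'))) w‖
        ≤ ‖u y‖ * (Cd * ‖w‖) := by
          refine mul_le_mul_of_nonneg_left ?_ (norm_nonneg _)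
          exact le_trans (ContinuousLinearMap.le_opNorm _ w)
            (mul_le_mul_of_nonneg_right h5 (norm_nonneg w))
      _ = Cd * ‖u y‖ * ‖w‖ := by ring
  have hdiff : ∀ (y x' : E), HasFDerivAt (fun x'' => F x'' y) (F' x' y) x' := by
    intro y x'
    have h1 : HasFDerivAt (fun x'' : E => y - x'') (-(ContinuousLinearMap.id ℝ E)) x' :=
      (hasFDerivAt_id x').const_sub y
    have h2 := ((φ.differentiable (y - x')).hasFDerivAt).comp x' h1
    have h3 := conjL.hasFDerivAt.comp x' h2
    have h4 := (h3.mul_const (u y)).mul_const (eps ξ y)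
    refine h4.congr_fderiv ?_
    ext w
    simp only [hF', ContinuousLinearMap.neg_apply, ContinuousLinearMap.smul_apply,
      ContinuousLinearMap.comp_apply, ContinuousLinearMap.id_apply, conjL_apply,
      smul_eq_mul, map_neg, mul_neg, neg_neg]
    ring
  have hF_meas : ∀ᶠ x' in nhds x, AEStronglyMeasurable (F x') (volume : Measure E) := by
    refine Filter.Eventually.of_forall fun x' => ?_
    exact (((continuous_tconj x' φ).mul u.continuous).mul (continuous_eps ξ)).aestronglyMeasurable
  have hF_int : Integrable (F x) (volume : Measure E) := by
    refine (keyInt x ξ φ u).congr (Filter.Eventually.of_forall fun y => ?_)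
    rw [hF]; show tconj x φ y * eps ξ y * u y = tconj x φ y * u y * eps ξ y; ring
  have hcfd : Continuous fun y : E => fderiv ℝ (⇑φ) y := by
    have h0 := (SchwartzMap.fderivCLM ℝ E ℂ φ).continuous
    have he : ⇑(SchwartzMap.fderivCLM ℝ E ℂ φ) = fun y : E => fderiv ℝ (⇑φ) y :=
      funext fun y => SchwartzMap.fderivCLM_apply ℝ φ y
    rwa [he] at h0
  have hF'_meas : AEStronglyMeasurable (F' x) (volume : Measure E) := by
    have hc1 : Continuous fun y : E => conjL.comp (fderiv ℝ (⇑φ) (y - x)) :=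
      continuous_const.clm_comp (hcfd.comp (continuous_id.sub continuous_const))
    exact (((u.continuous.mul (continuous_eps ξ)).smul hc1).neg).aestronglyMeasurable
  have bound_int : Integrable (fun y => Cd * ‖u y‖) (volume : Measure E) :=
    (u.integrable.norm).const_mul Cd
  have hmain := hasFDerivAt_integral_of_dominated_of_fderiv_le (𝕜 := ℝ) (s := Set.univ)
    Filter.univ_mem hF_meas hF_int hF'_meas
    (Filter.Eventually.of_forall fun y => fun x' _ => hb x' y) bound_int
    (Filter.Eventually.of_forall fun y => fun x' _ => hdiff y x')
  have hW : HasFDerivAt (fun x' => WPT (⇑φ) (⇑u) x' ξ) (∫ y, F' x y) x := by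
    have he : (fun x' => ∫ y, F x' y) = fun x' => WPT (⇑φ) (⇑u) x' ξ :=
      funext fun x' => (hWPT x').symm
    rwa [he] at hmain
  have hint' : Integrable (F' x) (volume : Measure E) :=
    bound_int.mono' hF'_meas (Filter.Eventually.of_forall fun y => hb x y)
  rw [hW.fderiv, ContinuousLinearMap.integral_apply hint' v]
  rw [show (fun y => F' x y v)
      = fun y => -(tconj x (SchwartzMap.pderivCLM ℝ v φ) y * eps ξ y * u y) from
    funext fun y => by
      simp only [hF', ContinuousLinearMap.neg_apply, ContinuousLinearMap.smul_apply,
        smul_eq_mul, tconj_deriv_apply]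
      ring]
  rw [integral_neg]


lemma lap_eq (f : 𝓢(E, ℂ)) (y : E) :
    lap (⇑f) y = ∑ j : Fin n,
      (SchwartzMap.pderivCLM ℝ (EuclideanSpace.single j 1)
        (SchwartzMap.pderivCLM ℝ (EuclideanSpace.single j 1) f)) y := by
  rw [lap]
  refine Finset.sum_congr rfl fun j _ => ?_
  rw [SchwartzMap.pderivCLM_apply]
  rw [show (fun z => fderiv ℝ (⇑f) z (EuclideanSpace.single j 1))
      = ⇑(SchwartzMap.pderivCLM ℝ (EuclideanSpace.single j 1) f) from
    funext fun z => (SchwartzMap.pderivCLM_apply ℝ _ f z).symm]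

lemma Mlin_single (ξ : E) (j : Fin n) :
    Mlin ξ (EuclideanSpace.single j 1) = -Complex.I * ((ξ j : ℝ) : ℂ) := by
  rw [Mlin_apply]
  norm_num [EuclideanSpace.inner_single_left]

lemma norm_sq_eq (ξ : E) : ((‖ξ‖^2 : ℝ) : ℂ) = ∑ j : Fin n, ((ξ j : ℝ) : ℂ)^2 := by
  have h : (‖ξ‖^2 : ℝ) = ∑ j, (ξ j)^2 := by
    rw [← real_inner_self_eq_norm_sq, PiLp.inner_apply]
    simp [sq]
  rw [h]
  push_cast
  rfl

end Stmt12Aux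

theorem stmt12 (n : ℕ) (u φ : SchwartzMap (EuclideanSpace ℝ (Fin n)) ℂ) :
    ∀ x ξ : EuclideanSpace ℝ (Fin n),
      WPT (⇑φ) (fun y => (1 / 2 : ℂ) * lap (⇑u) y) x ξ
        =
      WPT (fun y => (1 / 2 : ℂ) * lap (⇑φ) y) (⇑u) x ξ
        + Complex.I * ∑ j : Fin n, ((ξ j : ℝ) : ℂ) *
            fderiv ℝ (fun x' => WPT (⇑φ) (⇑u) x' ξ) x (EuclideanSpace.single j 1)
        - ((‖ξ‖ ^ 2 : ℝ) : ℂ) / 2 * WPT (⇑φ) (⇑u) x ξ := by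
  intro x ξ
  classical
  open Stmt12Aux in
  set v : Fin n → EuclideanSpace ℝ (Fin n) := fun j => EuclideanSpace.single j 1 with hv
  -- abbreviations
  set A0 : ℂ := ∫ y, tconj x φ y * eps ξ y * u y with hA0
  set A1 : Fin n → ℂ := fun j =>
    ∫ y, tconj x (SchwartzMap.pderivCLM ℝ (v j) φ) y * eps ξ y * u y with hA1
  set A2 : Fin n → ℂ := fun j =>
    ∫ y, tconj x (SchwartzMap.pderivCLM ℝ (v j)
      (SchwartzMap.pderivCLM ℝ (v j) φ)) y * eps ξ y * u y with hA2
  -- the left-hand side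
  have hL : WPT (⇑φ) (fun y => (1 / 2 : ℂ) * lap (⇑u) y) x ξ
      = ∑ j : Fin n, ((1/2 : ℂ) * ((Mlin ξ (v j))^2 * A0 + 2 * Mlin ξ (v j) * A1 j + A2 j)) := by
    rw [WPT]
    rw [show (fun y => starRingEnd ℂ (φ (y - x)) * ((1 / 2 : ℂ) * lap (⇑u) y) *
          Complex.exp (-Complex.I * ((inner ℝ y ξ : ℝ) : ℂ)))
        = fun y => ∑ j : Fin n, (1/2 : ℂ) * (tconj x φ y * eps ξ y *
            (SchwartzMap.pderivCLM ℝ (v j) (SchwartzMap.pderivCLM ℝ (v j) u)) y) from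
      funext fun y => by
        rw [← eps_eq, lap_eq u y]
        show tconj x φ y * _ * eps ξ y = _
        rw [show tconj x φ y * ((1/2 : ℂ) * ∑ j : Fin n,
              (SchwartzMap.pderivCLM ℝ (EuclideanSpace.single j 1)
                (SchwartzMap.pderivCLM ℝ (EuclideanSpace.single j 1) u)) y) * eps ξ y
            = ((1/2 : ℂ) * (tconj x φ y * eps ξ y)) * ∑ j : Fin n,
              (SchwartzMap.pderivCLM ℝ (v j) (SchwartzMap.pderivCLM ℝ (v j) u)) y from by
          ring, Finset.mul_sum]
        exact Finset.sum_congr rfl fun j _ => by ring]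
    rw [integral_finset_sum _ (fun j _ => keyInt' x ξ φ _ _)]
    refine Finset.sum_congr rfl fun j _ => ?_
    rw [integral_const_mul, double_ibp x ξ (v j) φ u]
  -- first term on the right
  have hT1 : WPT (fun y => (1 / 2 : ℂ) * lap (⇑φ) y) (⇑u) x ξ
      = ∑ j : Fin n, (1/2 : ℂ) * A2 j := by
    rw [WPT]
    rw [show (fun y => starRingEnd ℂ ((1 / 2 : ℂ) * lap (⇑φ) (y - x)) * u y *
          Complex.exp (-Complex.I * ((inner ℝ y ξ : ℝ) : ℂ)))
        = fun y => ∑ j : Fin n, (1/2 : ℂ) *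
            (tconj x (SchwartzMap.pderivCLM ℝ (v j)
              (SchwartzMap.pderivCLM ℝ (v j) φ)) y * eps ξ y * u y) from
      funext fun y => by
        rw [← eps_eq, map_mul, lap_eq φ (y - x), map_sum,
          show starRingEnd ℂ (1/2 : ℂ) = (1/2 : ℂ) from by
            rw [show (1/2 : ℂ) = ((1/2 : ℝ) : ℂ) from by norm_num, Complex.conj_ofReal]]
        simp only [tconj]
        rw [Finset.mul_sum, Finset.sum_mul, Finset.sum_mul]
        exact Finset.sum_congr rfl fun j _ => by ring]
    rw [integral_finset_sum _ (fun j _ => keyInt' x ξ _ _ _)]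
    exact Finset.sum_congr rfl fun j _ => integral_const_mul _ _
  -- the zeroth term
  have hA : WPT (⇑φ) (⇑u) x ξ = A0 := by
    rw [WPT, hA0]
    apply integral_congr_ae (Filter.Eventually.of_forall fun y => ?_)
    rw [← eps_eq]
    show tconj x φ y * u y * eps ξ y = tconj x φ y * eps ξ y * u y
    ring
  -- the middle term
  have hT2 : ∀ j : Fin n, fderiv ℝ (fun x' => WPT (⇑φ) (⇑u) x' ξ) x
      (EuclideanSpace.single j 1) = -A1 j := fun j => fderiv_WPT x ξ φ u (v j)
  rw [hL, hT1, hA, norm_sq_eq ξ]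
  rw [show (∑ j : Fin n, ((ξ j : ℝ) : ℂ) *
        fderiv ℝ (fun x' => WPT (⇑φ) (⇑u) x' ξ) x (EuclideanSpace.single j 1))
      = ∑ j : Fin n, ((ξ j : ℝ) : ℂ) * (-A1 j) from
    Finset.sum_congr rfl fun j _ => by rw [hT2 j]]
  rw [Finset.mul_sum, Finset.sum_div, Finset.sum_mul, ← Finset.sum_add_distrib,
    ← Finset.sum_sub_distrib]
  refine Finset.sum_congr rfl fun j _ => ?_
  rw [Mlin_single ξ j]
  linear_combination ((1/2 : ℂ) * ((ξ j : ℝ) : ℂ)^2 * A0) * Complex.I_sq
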